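/- Let F be a field of characteristic p > 0 with p ∣ n and n ≥ 2, and suppose the additive quotient group F/F^{(p)} is infinite. Let N be the set of all n×n matrices X over F such that X^{pᵏ} = a·1 for some integer k ≥ 0 and some a ∈ F. Consider the equivalence relation on N defined by X ∼ Y if and only if there exist g ∈ GL_n(F) and c ∈ F with Y = g X g⁻¹ + c·1 (i.e. the images of X and Y in the Lie algebra of PGL_n are conjugate). Then N has infinitely many equivalence classes. -/

import Mathlib

open Matrix

/-- The weighted cyclic-shift matrix. -/
def cycMat (F : Type*) [Field F] (n m : ℕ) (a : F) : Matrix (Fin n) (Fin n) F :=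
  fun i j => if (j : ℕ) = ((i : ℕ) + m) % n then (if n ≤ (i : ℕ) + m then a else 1) else 0

lemma cyc_pow_aux {F : Type*} [Field F] {n p m : ℕ} (hm : 0 < m) (hnpm : n = p * m)
    (hp : 0 < p) (a : F) (k : ℕ) (hk : k ≤ p) :
    (cycMat F n m a) ^ k
      = fun (i j : Fin n) => if (j : ℕ) = ((i : ℕ) + k * m) % n then
          (if n ≤ (i : ℕ) + k * m then a else 1) else 0 := by
  have hn : 0 < n := hnpm ▸ Nat.mul_pos hp hm
  induction k with
  | zero =>
    funext i j
    have hi : (i : ℕ) % n = (i : ℕ) := Nat.mod_eq_of_lt i.isLt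
    have hni : ¬ n ≤ (i : ℕ) := not_le.mpr i.isLt
    simp [pow_zero, Matrix.one_apply, hi, hni, Fin.ext_iff, eq_comm]
  | succ k ih =>
    have hk' : k ≤ p := le_of_lt (Nat.lt_of_succ_le hk)
    rw [pow_succ, ih hk']
    funext i j
    erw [Matrix.mul_apply]
    set l0 : Fin n := ⟨((i : ℕ) + k * m) % n, Nat.mod_lt _ hn⟩ with hl0
    rw [Finset.sum_eq_single l0]
    · simp only [cycMat]
      simp only [hl0, Fin.val_mk, eq_self_iff_true, if_true]
      have h2 : (((i : ℕ) + k * m) % n + m) % n = ((i : ℕ) + (k + 1) * m) % n := by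
        rw [Nat.mod_add_mod]; ring_nf
      rw [h2]
      by_cases hw : n ≤ (i : ℕ) + k * m
      · have hi := i.isLt
        have hkm : k * m ≤ n := by rw [hnpm]; exact Nat.mul_le_mul_right m hk'
        have hmod : ((i : ℕ) + k * m) % n = (i : ℕ) + k * m - n := by
          rw [Nat.mod_eq_sub_mod hw, Nat.mod_eq_of_lt (by omega)]
        have hkm1 : (k + 1) * m ≤ n := by
          rw [hnpm]; exact Nat.mul_le_mul_right m hk
        have hsucc : (k + 1) * m = k * m + m := by ring
        have hnw2 : ¬ n ≤ ((i : ℕ) + k * m) % n + m := by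
          rw [hmod]; omega
        have hw' : n ≤ (i : ℕ) + (k + 1) * m := by omega
        by_cases hj : (j : ℕ) = ((i : ℕ) + (k + 1) * m) % n
        · rw [if_pos hw, if_pos hj, if_neg hnw2, if_pos hj, if_pos hw', mul_one]
        · rw [if_neg hj, if_neg hj, mul_zero]
      · have hmod : ((i : ℕ) + k * m) % n = (i : ℕ) + k * m := by
          rw [Nat.mod_eq_of_lt (by omega)]
        have hsucc : (i : ℕ) + k * m + m = (i : ℕ) + (k + 1) * m := by ring
        rw [if_neg hw, one_mul]
        simp only [hmod, hsucc]
    · intro b _ hb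
      have : (b : ℕ) ≠ ((i : ℕ) + k * m) % n := by
        intro h; exact hb (Fin.ext h)
      rw [if_neg this, zero_mul]
    · intro h; exact absurd (Finset.mem_univ l0) h

lemma cyc_pow_p {F : Type*} [Field F] {n p m : ℕ} (hm : 0 < m) (hnpm : n = p * m)
    (hp : 0 < p) (a : F) :
    (cycMat F n m a) ^ p = a • (1 : Matrix (Fin n) (Fin n) F) := by
  rw [cyc_pow_aux hm hnpm hp a p le_rfl]
  funext i j
  have h1 : ((i : ℕ) + p * m) % n = (i : ℕ) := by
    rw [← hnpm, Nat.add_mod_right, Nat.mod_eq_of_lt i.isLt]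
  have h2 : n ≤ (i : ℕ) + p * m := by rw [← hnpm]; omega
  simp only [h1, h2, if_true, if_pos]
  rw [Matrix.smul_apply, Matrix.one_apply]
  by_cases hij : i = j
  · simp [hij]
  · have : (j : ℕ) ≠ (i : ℕ) := fun h => hij (Fin.ext h.symm)
    simp [hij, this]

/-- Let `F` be a field of characteristic `p > 0` with `p ∣ n` and `n ≥ 2`, and suppose the
additive quotient group `F/F^{(p)}` is infinite (where `F^{(p)} = {xᵖ : x ∈ F}` is an additive
subgroup of `F`).  Let `N` be the set of `n×n` matrices `X` with `X^{pᵏ} = a • 1` for some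
`k ≥ 0` and `a ∈ F`.  Consider the equivalence relation on `N` given by `X ∼ Y` iff there are
`g ∈ GL_n(F)` and `c ∈ F` with `Y = g X g⁻¹ + c • 1`.  Then `N` has infinitely many
equivalence classes. -/
theorem infinitely_many_pgl_nilpotent_classes
    {F : Type*} [Field F] (p n : ℕ) (hp : 0 < p) [CharP F p]
    (hn : 2 ≤ n) (hpn : p ∣ n)
    (H : AddSubgroup F) (hH : (H : Set F) = {x : F | ∃ y : F, y ^ p = x})
    (hinf : Infinite (F ⧸ H)) :
    {S : Set (Matrix (Fin n) (Fin n) F) |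
      ∃ X : Matrix (Fin n) (Fin n) F,
        (∃ (k : ℕ) (a : F), X ^ p ^ k = a • (1 : Matrix (Fin n) (Fin n) F)) ∧
        S = {Y | (∃ (k : ℕ) (a : F), Y ^ p ^ k = a • (1 : Matrix (Fin n) (Fin n) F)) ∧
          ∃ (g : GL (Fin n) F) (c : F),
            Y = (g : Matrix (Fin n) (Fin n) F) * X *
                ((g⁻¹ : GL (Fin n) F) : Matrix (Fin n) (Fin n) F)
              + c • (1 : Matrix (Fin n) (Fin n) F)}}.Infinite := by
  classical
  obtain ⟨m, hnpm⟩ := hpn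
  haveI : NeZero p := ⟨hp.ne'⟩
  have hprime : p.Prime := (CharP.char_is_prime_of_pos F p).out
  have hm : 0 < m := by
    rcases Nat.eq_zero_or_pos m with h | h
    · subst h; simp at hnpm; omega
    · exact h
  have hn0 : 0 < n := by omega
  have hXp : ∀ a : F, (cycMat F n m a) ^ p = a • (1 : Matrix (Fin n) (Fin n) F) :=
    fun a => cyc_pow_p hm hnpm hp a
  -- the candidate classes
  set f : F ⧸ H → Set (Matrix (Fin n) (Fin n) F) := fun q =>
    {Y | (∃ (k : ℕ) (a : F), Y ^ p ^ k = a • (1 : Matrix (Fin n) (Fin n) F)) ∧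
      ∃ (g : GL (Fin n) F) (c : F),
        Y = (g : Matrix (Fin n) (Fin n) F) * cycMat F n m q.out *
            ((g⁻¹ : GL (Fin n) F) : Matrix (Fin n) (Fin n) F)
          + c • (1 : Matrix (Fin n) (Fin n) F)} with hf
  have hXmem : ∀ a : F, ∃ (k : ℕ) (b : F),
      (cycMat F n m a) ^ p ^ k = b • (1 : Matrix (Fin n) (Fin n) F) :=
    fun a => ⟨1, a, by rw [pow_one]; exact hXp a⟩
  have hmem : ∀ q : F ⧸ H, f q ∈
      {S : Set (Matrix (Fin n) (Fin n) F) |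
        ∃ X : Matrix (Fin n) (Fin n) F,
          (∃ (k : ℕ) (a : F), X ^ p ^ k = a • (1 : Matrix (Fin n) (Fin n) F)) ∧
          S = {Y | (∃ (k : ℕ) (a : F), Y ^ p ^ k = a • (1 : Matrix (Fin n) (Fin n) F)) ∧
            ∃ (g : GL (Fin n) F) (c : F),
              Y = (g : Matrix (Fin n) (Fin n) F) * X *
                  ((g⁻¹ : GL (Fin n) F) : Matrix (Fin n) (Fin n) F)
                + c • (1 : Matrix (Fin n) (Fin n) F)}} := by
    intro q
    exact ⟨cycMat F n m q.out, hXmem q.out, rfl⟩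
  have hinj : Function.Injective f := by
    intro q1 q2 heq
    -- X_{q2.out} belongs to f q2 = f q1
    have hmem2 : cycMat F n m q2.out ∈ f q1 := by
      rw [heq]
      refine ⟨hXmem q2.out, 1, 0, ?_⟩
      simp
    simp only [hf, Set.mem_setOf_eq] at hmem2
    obtain ⟨-, g, c, hY⟩ := hmem2
    -- take p-th powers
    haveI : Fact p.Prime := ⟨hprime⟩
    haveI : Nonempty (Fin n) := ⟨⟨0, hn0⟩⟩
    haveI : CharP (Matrix (Fin n) (Fin n) F) p := Matrix.charP p
    have hcomm : Commute ((g : Matrix (Fin n) (Fin n) F) * cycMat F n m q1.out *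
        ((g⁻¹ : GL (Fin n) F) : Matrix (Fin n) (Fin n) F))
        (c • (1 : Matrix (Fin n) (Fin n) F)) :=
      (Commute.one_right _).smul_right c
    have hpow : (cycMat F n m q2.out) ^ p = (q1.out + c ^ p) • (1 : Matrix (Fin n) (Fin n) F) := by
      rw [hY, add_pow_char_of_commute _ hcomm, smul_pow, one_pow]
      have hconj : ((g : Matrix (Fin n) (Fin n) F) * cycMat F n m q1.out *
          ((g⁻¹ : GL (Fin n) F) : Matrix (Fin n) (Fin n) F)) ^ p
          = (g : Matrix (Fin n) (Fin n) F) * (cycMat F n m q1.out) ^ p *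
            ((g⁻¹ : GL (Fin n) F) : Matrix (Fin n) (Fin n) F) := Units.conj_pow g _ p
      rw [hconj, hXp, Matrix.mul_smul, Matrix.smul_mul, mul_one, Units.mul_inv, add_smul]
    have heqs : q2.out • (1 : Matrix (Fin n) (Fin n) F) = (q1.out + c ^ p) • 1 :=
      (hXp q2.out).symm.trans hpow
    set i0 : Fin n := ⟨0, hn0⟩ with hi0
    have hval : q2.out = q1.out + c ^ p := by
      have := congrArg (fun M : Matrix (Fin n) (Fin n) F => M i0 i0) heqs
      simpa [Matrix.smul_apply, Matrix.one_apply] using this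
    have hc : c ^ p ∈ H := by
      have : c ^ p ∈ (H : Set F) := by rw [hH]; exact ⟨c, rfl⟩
      exact this
    rw [← QuotientAddGroup.out_eq' q1, ← QuotientAddGroup.out_eq' q2, QuotientAddGroup.eq]
    have : -q1.out + q2.out = c ^ p := by rw [hval]; ring
    rw [this]  -- may need out' vs out adjustment
    exact hc
  exact Set.infinite_of_injective_forall_mem hinj hmem
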